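/- Let E ∈ ℝ^{d×d} be a square column-stochastic matrix. Then there exists a natural number n ≥ 1 such that for every pair of probability vectors p, q ∈ Δ^{d-1} there exists a prior γ ∈ Δ^{d-1} with Eⁿγ entrywise positive and with the Bayes map of Eⁿ based on γ sending q to p, if and only if there exists a natural number n ≥ 1 such that every entry of Eⁿ is positive (i.e. E is a primitive matrix). -/

import Mathlib

open Matrix BigOperators

/-- A column-stochastic matrix: nonnegative entries, each column sums to 1. -/
def ColStochastic {d' d : ℕ} (E : Matrix (Fin d') (Fin d) ℝ) : Prop :=
  (∀ y x, 0 ≤ E y x) ∧ ∀ x, ∑ y, E y x = 1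

/-- A probability vector: nonnegative entries summing to 1. -/
def ProbVec {d : ℕ} (p : Fin d → ℝ) : Prop :=
  (∀ x, 0 ≤ p x) ∧ ∑ x, p x = 1

/-- The Bayes map `Ê_γ = D_γ Eᵀ D_{Eγ}⁻¹`, entrywise `(Ê_γ)_{x,y} = E_{y,x} γ_x / (Eγ)_y`. -/
noncomputable def bayesMap {d' d : ℕ} (E : Matrix (Fin d') (Fin d) ℝ) (γ : Fin d → ℝ) :
    Matrix (Fin d) (Fin d') ℝ :=
  Matrix.of fun x y => E y x * γ x / (E *ᵥ γ) y

lemma probVec_single {d : ℕ} (x : Fin d) : ProbVec (fun z => if z = x then (1:ℝ) else 0) := by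
  constructor
  · intro z; positivity
  · simp

lemma colStoch_pow {d : ℕ} (E : Matrix (Fin d) (Fin d) ℝ) (hE : ColStochastic E) (n : ℕ) :
    ColStochastic (E ^ n) := by
  induction n with
  | zero =>
    constructor
    · intro y x
      simp [pow_zero, Matrix.one_apply]
      positivity
    · intro x
      simp [pow_zero, Matrix.one_apply]
  | succ k ih =>
    rw [pow_succ]
    constructor
    · intro y x
      rw [Matrix.mul_apply]
      exact Finset.sum_nonneg fun z _ => mul_nonneg (ih.1 y z) (hE.1 z x)
    · intro x
      simp only [Matrix.mul_apply]
      rw [Finset.sum_comm]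
      have : ∀ z, ∑ y, (E ^ k) y z * E z x = E z x := by
        intro z
        rw [← Finset.sum_mul, ih.2 z, one_mul]
      simp_rw [this]
      exact hE.2 x

lemma sum_mul_vsub {d : ℕ} (S : Finset (Fin d)) (f : Fin d → ℝ) {x x' : Fin d}
    (hx : x ∈ S) (hx' : x' ∈ S) :
    ∑ z ∈ S, f z * ((if z = x then (1:ℝ) else 0) - (if z = x' then 1 else 0)) = f x - f x' := by
  simp only [mul_sub, Finset.sum_sub_distrib, mul_ite, mul_one, mul_zero]
  rw [Finset.sum_ite_eq' S x f, Finset.sum_ite_eq' S x' f, if_pos hx, if_pos hx']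

lemma bayes_hack {d : ℕ} (A : Matrix (Fin d) (Fin d) ℝ)
    (hApos : ∀ y x, 0 < A y x) (hAcol : ∀ x, ∑ y, A y x = 1)
    (p q : Fin d → ℝ) (hp : ProbVec p) (hq : ProbVec q) :
    ∃ γ : Fin d → ℝ, ProbVec γ ∧ (∀ y, 0 < (A *ᵥ γ) y) ∧ (bayesMap A γ) *ᵥ q = p := by
  classical
  -- support of p
  obtain ⟨x0, hx0⟩ : ∃ x, 0 < p x := by
    by_contra hc
    push_neg at hc
    have h0 : ∀ x, p x = 0 := fun x => le_antisymm (hc x) (hp.1 x)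
    have h1 := hp.2
    rw [Finset.sum_eq_zero (fun x _ => h0 x)] at h1
    exact zero_ne_one h1
  set S : Finset (Fin d) := Finset.univ.filter (fun x => 0 < p x) with hSdef
  have hx0S : x0 ∈ S := by simp [hSdef, hx0]
  have hSmem : ∀ x, x ∈ S ↔ 0 < p x := by intro x; simp [hSdef]
  have hSne : S.Nonempty := ⟨x0, hx0S⟩
  have hpS : ∀ x, x ∉ S → p x = 0 := by
    intro x hx
    rw [hSmem] at hx
    exact le_antisymm (not_lt.mp hx) (hp.1 x)
  have hpsum : ∑ x ∈ S, p x = 1 := by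
    rw [← hp.2]
    exact Finset.sum_subset (Finset.subset_univ S) (fun x _ hx => hpS x hx)
  -- min entry of A
  haveI : Nonempty (Fin d) := ⟨x0⟩
  obtain ⟨t0, -, hm⟩ := Finset.exists_min_image (Finset.univ ×ˢ Finset.univ)
    (fun t : Fin d × Fin d => A t.1 t.2) ⟨(x0, x0), by simp⟩
  set m : ℝ := A t0.1 t0.2 with hmdef
  have hm0 : 0 < m := hApos t0.1 t0.2
  have hmle : ∀ y x, m ≤ A y x := fun y x => hm (y, x) (by simp)
  have hm1 : m ≤ 1 := by
    calc m ≤ A x0 x0 := hmle x0 x0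
    _ ≤ ∑ y, A y x0 := Finset.single_le_sum (fun y _ => (hApos y x0).le) (Finset.mem_univ x0)
    _ = 1 := hAcol x0
  -- lower bound on A *ᵥ γ for prob vectors
  have hAγ : ∀ γ : Fin d → ℝ, (∀ x, 0 ≤ γ x) → ∑ x, γ x = 1 → ∀ y, m ≤ ∑ z, A y z * γ z := by
    intro γ h0 h1 y
    calc m = ∑ z, m * γ z := by rw [← Finset.mul_sum, h1, mul_one]
    _ ≤ ∑ z, A y z * γ z :=
      Finset.sum_le_sum fun z _ => mul_le_mul_of_nonneg_right (hmle y z) (h0 z)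
  -- the objective
  set F : (Fin d → ℝ) → ℝ :=
    fun γ => ∑ z ∈ S, p z * Real.log (γ z) - ∑ y, q y * Real.log (∑ z, A y z * γ z)
    with hFdef
  set pm : ℝ := S.inf' hSne p with hpmdef
  have hpm0 : 0 < pm := by
    rw [hpmdef, Finset.lt_inf'_iff]
    intro x hx
    exact (hSmem x).mp hx
  have hpmle : ∀ x ∈ S, pm ≤ p x := fun x hx => Finset.inf'_le p hx
  have hpm1 : pm ≤ 1 := by
    calc pm ≤ p x0 := hpmle x0 hx0S
    _ ≤ ∑ x, p x := Finset.single_le_sum (fun x _ => hp.1 x) (Finset.mem_univ x0)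
    _ = 1 := hp.2
  set ε : ℝ := min pm (Real.exp ((F p + Real.log m - 1) / pm)) with hεdef
  have hε0 : 0 < ε := lt_min hpm0 (Real.exp_pos _)
  have hεpm : ε ≤ pm := min_le_left _ _
  have hε1 : ε ≤ 1 := hεpm.trans hpm1
  have hεlog : pm * Real.log ε ≤ F p + Real.log m - 1 := by
    have h1 : Real.log ε ≤ (F p + Real.log m - 1) / pm := by
      rw [Real.log_le_iff_le_exp hε0]
      exact min_le_right _ _
    calc pm * Real.log ε ≤ pm * ((F p + Real.log m - 1) / pm) :=
      mul_le_mul_of_nonneg_left h1 hpm0.le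
    _ = F p + Real.log m - 1 := by field_simp
  -- the compact set
  set K : Set (Fin d → ℝ) :=
    {γ | (∀ x ∈ S, ε ≤ γ x) ∧ (∀ x, x ∉ S → γ x = 0) ∧ ∑ x, γ x = 1} with hKdef
  have hpK : p ∈ K := ⟨fun x hx => hεpm.trans (hpmle x hx), hpS, hp.2⟩
  have hKnn : ∀ γ ∈ K, ∀ x, 0 ≤ γ x := by
    intro γ hγ x
    by_cases hx : x ∈ S
    · exact hε0.le.trans (hγ.1 x hx)
    · rw [hγ.2.1 x hx]
  have hKle1 : ∀ γ ∈ K, ∀ x, γ x ≤ 1 := by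
    intro γ hγ x
    calc γ x ≤ ∑ z, γ z := Finset.single_le_sum (fun z _ => hKnn γ hγ z) (Finset.mem_univ x)
    _ = 1 := hγ.2.2
  have hKpos : ∀ γ ∈ K, ∀ x ∈ S, 0 < γ x := fun γ hγ x hx => hε0.trans_le (hγ.1 x hx)
  have hKA : ∀ γ ∈ K, ∀ y, 0 < ∑ z, A y z * γ z :=
    fun γ hγ y => hm0.trans_le (hAγ γ (hKnn γ hγ) hγ.2.2 y)
  have hKclosed : IsClosed K := by
    have e1 : {γ : Fin d → ℝ | ∀ x ∈ S, ε ≤ γ x} = ⋂ x, ⋂ (_ : x ∈ S), {γ | ε ≤ γ x} := by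
      ext γ; simp
    have e2 : {γ : Fin d → ℝ | ∀ x, x ∉ S → γ x = 0} =
        ⋂ x, ⋂ (_ : x ∉ S), {γ | γ x = 0} := by
      ext γ; simp
    have h1 : IsClosed {γ : Fin d → ℝ | ∀ x ∈ S, ε ≤ γ x} := by
      rw [e1]
      exact isClosed_iInter fun x => isClosed_iInter fun _ =>
        isClosed_le continuous_const (continuous_apply x)
    have h2 : IsClosed {γ : Fin d → ℝ | ∀ x, x ∉ S → γ x = 0} := by
      rw [e2]
      exact isClosed_iInter fun x => isClosed_iInter fun _ =>
        isClosed_eq (continuous_apply x) continuous_const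
    have h3 : IsClosed {γ : Fin d → ℝ | ∑ x, γ x = 1} :=
      isClosed_eq (continuous_finset_sum _ fun x _ => continuous_apply x) continuous_const
    have : K = {γ : Fin d → ℝ | ∀ x ∈ S, ε ≤ γ x} ∩
        ({γ : Fin d → ℝ | ∀ x, x ∉ S → γ x = 0} ∩ {γ : Fin d → ℝ | ∑ x, γ x = 1}) := by
      ext γ; simp [hKdef, Set.mem_setOf_eq, and_assoc]
    rw [this]
    exact h1.inter (h2.inter h3)
  have hKcpt : IsCompact K := by
    refine IsCompact.of_isClosed_subset (isCompact_Icc (a := (0 : Fin d → ℝ)) (b := 1))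
      hKclosed ?_
    intro γ hγ
    rw [Set.mem_Icc]
    constructor
    · intro x; exact hKnn γ hγ x
    · intro x; exact hKle1 γ hγ x
  have hFcont : ContinuousOn F K := by
    apply ContinuousOn.sub
    · apply continuousOn_finset_sum
      intro z hz
      apply ContinuousOn.mul continuousOn_const
      apply ContinuousOn.log (continuous_apply z).continuousOn
      intro γ hγ
      exact (hKpos γ hγ z hz).ne'
    · apply continuousOn_finset_sum
      intro y _
      apply ContinuousOn.mul continuousOn_const
      apply ContinuousOn.log
      · exact (continuous_finset_sum _ fun z _ =>
          continuous_const.mul (continuous_apply z)).continuousOn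
      · intro γ hγ
        exact (hKA γ hγ y).ne'
  obtain ⟨γ, hγK, hγmax⟩ := hKcpt.exists_isMaxOn ⟨p, hpK⟩ hFcont
  -- boundary: maximizer is in the interior of the faces
  have hbd : ∀ x ∈ S, ε < γ x := by
    intro x hx
    rcases lt_or_eq_of_le (hγK.1 x hx) with h | h
    · exact h
    · exfalso
      have hlog : ∀ z ∈ S, Real.log (γ z) ≤ 0 :=
        fun z _ => Real.log_nonpos (hKnn γ hγK z) (hKle1 γ hγK z)
      have h1 : ∑ z ∈ S, p z * Real.log (γ z) ≤ p x * Real.log (γ x) := by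
        rw [← Finset.add_sum_erase S _ hx]
        have hrest : ∑ z ∈ S.erase x, p z * Real.log (γ z) ≤ 0 :=
          Finset.sum_nonpos fun z hz =>
            mul_nonpos_of_nonneg_of_nonpos (hp.1 z) (hlog z (Finset.mem_of_mem_erase hz))
        linarith
      have h2 : p x * Real.log (γ x) ≤ pm * Real.log ε := by
        rw [← h]
        exact mul_le_mul_of_nonpos_right (hpmle x hx) (Real.log_nonpos hε0.le hε1)
      have h3 : Real.log m ≤ ∑ y, q y * Real.log (∑ z, A y z * γ z) := by
        calc Real.log m = ∑ y, q y * Real.log m := by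
              rw [← Finset.sum_mul, hq.2, one_mul]
        _ ≤ ∑ y, q y * Real.log (∑ z, A y z * γ z) :=
          Finset.sum_le_sum fun y _ => mul_le_mul_of_nonneg_left
            (Real.log_le_log hm0 (hAγ γ (hKnn γ hγK) hγK.2.2 y)) (hq.1 y)
      have h4 : F p ≤ F γ := hγmax hpK
      have h5 : F γ ≤ pm * Real.log ε - Real.log m := by
        rw [hFdef]
        dsimp only
        linarith
      linarith [hεlog]
  -- stationarity
  set L : Fin d → ℝ := fun y => ∑ z, A y z * γ z with hLdef
  have hL : ∀ y, 0 < L y := hKA γ hγK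
  set φ : Fin d → ℝ := fun x => p x / γ x - ∑ y, q y * (A y x / L y) with hφdef
  have hφconst : ∀ x ∈ S, ∀ x' ∈ S, φ x = φ x' := by
    intro x hx x' hx'
    by_cases hxx : x = x'
    · rw [hxx]
    set v : Fin d → ℝ := fun z => (if z = x then (1:ℝ) else 0) - (if z = x' then 1 else 0)
      with hvdef
    set δ : ℝ := min (γ x - ε) (γ x' - ε) with hδdef
    have hδ0 : 0 < δ := lt_min (sub_pos.mpr (hbd x hx)) (sub_pos.mpr (hbd x' hx'))
    have hδx : δ ≤ γ x - ε := min_le_left _ _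
    have hδx' : δ ≤ γ x' - ε := min_le_right _ _
    have hvsum : ∑ z, v z = 0 := by
      simp only [hvdef, Finset.sum_sub_distrib]
      rw [Finset.sum_ite_eq' Finset.univ x (fun _ => (1:ℝ)),
        Finset.sum_ite_eq' Finset.univ x' (fun _ => (1:ℝ))]
      simp
    have hmem : ∀ t : ℝ, |t| < δ → (fun z => γ z + t * v z) ∈ K := by
      intro t ht
      have ht1 : -δ < t := neg_lt_of_abs_lt ht
      have ht2 : t < δ := lt_of_abs_lt ht
      refine ⟨?_, ?_, ?_⟩
      · intro z hz
        simp only [hvdef]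
        rcases eq_or_ne z x with rfl | hzx
        · rw [if_pos rfl, if_neg hxx]
          have : -(γ z - ε) < t := by
            calc -(γ z - ε) ≤ -δ := by linarith
            _ < t := ht1
          linarith
        · rcases eq_or_ne z x' with rfl | hzx'
          · rw [if_neg hzx, if_pos rfl]
            have : t < γ z - ε := lt_of_lt_of_le ht2 hδx'
            linarith
          · rw [if_neg hzx, if_neg hzx']
            have := hγK.1 z hz
            linarith
      · intro z hz
        have hzx : z ≠ x := fun e => hz (e ▸ hx)
        have hzx' : z ≠ x' := fun e => hz (e ▸ hx')
        simp only [hvdef, if_neg hzx, if_neg hzx']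
        rw [hγK.2.1 z hz]
        ring
      · have : ∑ z, (γ z + t * v z) = (∑ z, γ z) + t * ∑ z, v z := by
          rw [Finset.sum_add_distrib, ← Finset.mul_sum]
        rw [this, hγK.2.2, hvsum]
        ring
    set g : ℝ → ℝ := fun t => ∑ z ∈ S, p z * Real.log (γ z + t * v z)
        - ∑ y, q y * Real.log (∑ z, A y z * (γ z + t * v z)) with hgdef
    have hgF : ∀ t, g t = F (fun z => γ z + t * v z) := fun t => rfl
    have hg0 : g 0 = F γ := by
      rw [hgF 0]
      congr 1
      funext z
      ring
    have hlocal : IsLocalMax g 0 := by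
      refine Filter.eventually_of_mem (Metric.ball_mem_nhds 0 hδ0) fun t ht => ?_
      rw [Metric.mem_ball, Real.dist_eq, sub_zero] at ht
      rw [hg0, hgF t]
      exact hγmax (hmem t ht)
    have hd1 : ∀ z ∈ S, HasDerivAt (fun t : ℝ => p z * Real.log (γ z + t * v z))
        (p z * (v z / (γ z + 0 * v z))) 0 := by
      intro z hz
      have hne : γ z + 0 * v z ≠ 0 := by
        rw [zero_mul, add_zero]
        exact (hKpos γ hγK z hz).ne'
      exact (((hasDerivAt_mul_const (v z)).const_add (γ z)).log hne).const_mul (p z)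
    have hd2 : ∀ y : Fin d, HasDerivAt
        (fun t : ℝ => q y * Real.log (∑ z, A y z * (γ z + t * v z)))
        (q y * ((∑ z, A y z * v z) / (∑ z, A y z * (γ z + 0 * v z)))) 0 := by
      intro y
      have hinner : HasDerivAt (fun t : ℝ => ∑ z, A y z * (γ z + t * v z))
          (∑ z, A y z * v z) 0 :=
        HasDerivAt.fun_sum fun z _ =>
          ((hasDerivAt_mul_const (v z)).const_add (γ z)).const_mul (A y z)
      have hne : (∑ z, A y z * (γ z + 0 * v z)) ≠ 0 := by
        have he : (∑ z, A y z * (γ z + 0 * v z)) = L y := by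
          rw [hLdef]
          exact Finset.sum_congr rfl fun z _ => by ring
        rw [he]
        exact (hL y).ne'
      exact (hinner.log hne).const_mul (q y)
    have hD : HasDerivAt g ((∑ z ∈ S, p z * (v z / (γ z + 0 * v z))) -
        ∑ y, q y * ((∑ z, A y z * v z) / (∑ z, A y z * (γ z + 0 * v z)))) 0 :=
      (HasDerivAt.fun_sum hd1).sub (HasDerivAt.fun_sum fun y _ => hd2 y)
    have hzero := hlocal.hasDerivAt_eq_zero hD
    simp only [zero_mul, add_zero] at hzero
    have e1 : ∑ z ∈ S, p z * (v z / γ z) = p x / γ x - p x' / γ x' := by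
      rw [← sum_mul_vsub S (fun z => p z / γ z) hx hx']
      exact Finset.sum_congr rfl fun z _ => by simp only [hvdef]; ring
    have e2 : ∀ y, ∑ z, A y z * v z = A y x - A y x' := by
      intro y
      rw [← sum_mul_vsub Finset.univ (fun z => A y z) (Finset.mem_univ x) (Finset.mem_univ x')]
    have e4 : ∑ y, q y * ((∑ z, A y z * v z) / (∑ z, A y z * γ z)) =
        (∑ y, q y * (A y x / L y)) - (∑ y, q y * (A y x' / L y)) := by
      rw [← Finset.sum_sub_distrib]
      refine Finset.sum_congr rfl fun y _ => ?_
      rw [e2 y]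
      simp only [hLdef]
      rw [sub_div]
      ring
    rw [e1, e4] at hzero
    rw [hφdef]
    dsimp only
    linarith
  have hγsum : ∑ z ∈ S, γ z = 1 := by
    rw [← hγK.2.2]
    exact Finset.sum_subset (Finset.subset_univ S) (fun x _ hx => hγK.2.1 x hx)
  have hφsum : ∑ z ∈ S, γ z * φ z = 0 := by
    have e1 : ∑ z ∈ S, γ z * (p z / γ z) = 1 := by
      rw [← hpsum]
      exact Finset.sum_congr rfl fun z hz => by
        rw [mul_comm, div_mul_cancel₀ _ (hKpos γ hγK z hz).ne']
    have hzsum : ∀ y, ∑ z ∈ S, A y z * γ z = L y := by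
      intro y
      rw [hLdef]
      exact Finset.sum_subset (Finset.subset_univ S)
        (fun z _ hz => by rw [hγK.2.1 z hz, mul_zero])
    have e2 : ∑ z ∈ S, γ z * (∑ y, q y * (A y z / L y)) = 1 := by
      calc ∑ z ∈ S, γ z * ∑ y, q y * (A y z / L y)
          = ∑ z ∈ S, ∑ y, γ z * (q y * (A y z / L y)) := by
            exact Finset.sum_congr rfl fun z _ => Finset.mul_sum _ _ _
        _ = ∑ y, ∑ z ∈ S, γ z * (q y * (A y z / L y)) := Finset.sum_comm
        _ = ∑ y : Fin d, q y := by
            refine Finset.sum_congr rfl fun y _ => ?_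
            calc ∑ z ∈ S, γ z * (q y * (A y z / L y))
                = (q y / L y) * ∑ z ∈ S, A y z * γ z := by
                  rw [Finset.mul_sum]
                  exact Finset.sum_congr rfl fun z _ => by ring
              _ = q y := by rw [hzsum y]; exact div_mul_cancel₀ _ (hL y).ne'
        _ = 1 := hq.2
    have e3 : ∑ z ∈ S, γ z * φ z =
        ∑ z ∈ S, γ z * (p z / γ z) - ∑ z ∈ S, γ z * (∑ y, q y * (A y z / L y)) := by
      rw [← Finset.sum_sub_distrib]
      refine Finset.sum_congr rfl fun z _ => ?_
      rw [hφdef]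
      ring
    rw [e3, e1, e2]
    ring
  have hφ0 : ∀ x ∈ S, φ x = 0 := by
    intro x hx
    calc φ x = ∑ z ∈ S, γ z * φ x := by rw [← Finset.sum_mul, hγsum, one_mul]
    _ = ∑ z ∈ S, γ z * φ z := Finset.sum_congr rfl fun z hz => by rw [hφconst x hx z hz]
    _ = 0 := hφsum
  -- conclusion
  refine ⟨γ, ⟨hKnn γ hγK, hγK.2.2⟩, ?_, ?_⟩
  · intro y
    have := hKA γ hγK y
    simpa [Matrix.mulVec, dotProduct] using this
  · funext x
    show (∑ y, (bayesMap A γ) x y * q y) = p x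
    simp only [bayesMap, Matrix.of_apply, Matrix.mulVec, dotProduct]
    by_cases hx : x ∈ S
    · have h := hφ0 x hx
      have hγx : γ x ≠ 0 := (hKpos γ hγK x hx).ne'
      have h2 : p x / γ x = ∑ y, q y * (A y x / L y) := by
        rw [hφdef] at h
        simp only at h
        linarith
      calc (∑ y, A y x * γ x / (∑ z, A y z * γ z) * q y)
          = γ x * ∑ y, q y * (A y x / L y) := by
            rw [Finset.mul_sum]
            exact Finset.sum_congr rfl fun y _ => by rw [hLdef]; ring
      _ = γ x * (p x / γ x) := by rw [← h2]
      _ = p x := by field_simp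
    · have hγx : γ x = 0 := hγK.2.1 x hx
      simp [hγx, hpS x hx]


theorem power_prior_hackable_iff_primitive {d : ℕ}
    (E : Matrix (Fin d) (Fin d) ℝ) (hE : ColStochastic E) :
    (∃ n : ℕ, 1 ≤ n ∧
      ∀ (p q : Fin d → ℝ), ProbVec p → ProbVec q →
        ∃ γ : Fin d → ℝ, ProbVec γ ∧ (∀ y, 0 < ((E ^ n) *ᵥ γ) y) ∧
          (bayesMap (E ^ n) γ) *ᵥ q = p) ↔
    (∃ n : ℕ, 1 ≤ n ∧ ∀ y x, 0 < (E ^ n) y x) := by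
  constructor
  · rintro ⟨n, hn, h⟩
    refine ⟨n, hn, fun y x => ?_⟩
    obtain ⟨γ, hγ, hpos, heq⟩ := h (fun z => if z = x then 1 else 0)
      (fun z => if z = y then 1 else 0) (probVec_single x) (probVec_single y)
    have hx := congrFun heq x
    simp only [Matrix.mulVec, dotProduct, bayesMap, Matrix.of_apply, if_pos rfl] at hx
    rw [Finset.sum_eq_single y (fun b _ hb => by simp [hb]) (by simp)] at hx
    norm_num at hx
    have hpos' : 0 < ∑ z, (E ^ n) y z * γ z := by
      simpa [Matrix.mulVec, dotProduct] using hpos y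
    rw [div_eq_one_iff_eq hpos'.ne'] at hx
    have h2 : 0 < (E ^ n) y x * γ x := hx ▸ hpos'
    by_contra hc
    push_neg at hc
    have : (E ^ n) y x * γ x ≤ 0 := mul_nonpos_of_nonpos_of_nonneg hc (hγ.1 x)
    linarith
  · rintro ⟨n, hn, hpos⟩
    exact ⟨n, hn, fun p q hp hq =>
      bayes_hack (E ^ n) hpos (colStoch_pow E hE n).2 p q hp hq⟩
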